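/- arXiv:0808.2308 — 2 statements merged into one kernel-verified Lean document; each statement's English description precedes it below -/
import Mathlib

section
/- If x is an irrational in (0,1) whose continued fraction digits are all bounded by M ≥ 2, then limsup_{n→∞} (log ∏_{i=1}^n a_i(x)) / (log q_n(x)) ≤ (1 + log 2 / (2 M (M+1) log M))^{−1} < 1. In particular, badly approximable numbers do not have arithmetic-geometric scaling equal to 1. -/
open Filter

/-- The Gauss map `x ↦ 1/x - ⌊1/x⌋`. -/
noncomputable def gaussMap (x : ℝ) : ℝ := 1 / x - ⌊1 / x⌋

/-- The `i`-th continued fraction digit of `x` (for `i ≥ 1`). -/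
noncomputable def cfDigit (x : ℝ) (i : ℕ) : ℕ := ⌊1 / (gaussMap^[i - 1] x)⌋₊

/-- Denominators of the convergents: `q_n = a_n q_{n-1} + q_{n-2}`, `q_{-1} = 0`, `q_0 = 1`. -/
def qRec (a : ℕ → ℕ) : ℕ → ℕ
  | 0 => 1
  | 1 => a 1
  | n + 2 => a (n + 2) * qRec a (n + 1) + qRec a n

/-- The denominator `q_n(x)` of the `n`-th convergent of `x`. -/
noncomputable def cfDenom (x : ℝ) : ℕ → ℕ := qRec (cfDigit x)

/-- `log (1+t) ≥ t log 2` for `t ∈ [0,1]`, by convexity of `exp`. -/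
lemma log_one_add_ge {t : ℝ} (h0 : 0 ≤ t) (h1 : t ≤ 1) :
    t * Real.log 2 ≤ Real.log (1 + t) := by
  have hconv := convexOn_exp.2 (Set.mem_univ (0 : ℝ)) (Set.mem_univ (Real.log 2))
    (by linarith : (0:ℝ) ≤ 1 - t) h0 (by ring)
  have hexp : Real.exp (t * Real.log 2) ≤ 1 + t := by
    have h2 : Real.exp (Real.log 2) = 2 := Real.exp_log (by norm_num)
    simp only [smul_eq_mul, mul_zero, zero_add, Real.exp_zero, h2] at hconv
    linarith
  rw [Real.le_log_iff_exp_le (by linarith)]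
  exact hexp

lemma qRec_pos (a : ℕ → ℕ) (ha : ∀ i, 1 ≤ i → 1 ≤ a i) : ∀ n, 1 ≤ qRec a n
  | 0 => le_refl 1
  | 1 => ha 1 le_rfl
  | n + 2 => le_trans (qRec_pos a ha n) (Nat.le_add_left _ _)

lemma qRec_mono (a : ℕ → ℕ) (ha : ∀ i, 1 ≤ i → 1 ≤ a i) :
    ∀ n, qRec a n ≤ qRec a (n + 1)
  | 0 => by simpa [qRec] using ha 1 le_rfl
  | n + 1 => by
      show qRec a (n+1) ≤ a (n+2) * qRec a (n+1) + qRec a n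
      calc qRec a (n+1) = 1 * qRec a (n+1) := (one_mul _).symm
        _ ≤ a (n+2) * qRec a (n+1) := Nat.mul_le_mul_right _ (ha (n+2) (by omega))
        _ ≤ _ := Nat.le_add_right _ _

lemma qRec_le (a : ℕ → ℕ) (ha : ∀ i, 1 ≤ i → 1 ≤ a i) :
    ∀ n, qRec a (n + 1) ≤ (a (n + 1) + 1) * qRec a n
  | 0 => by simp [qRec]
  | n + 1 => by
      show a (n+2) * qRec a (n+1) + qRec a n ≤ (a (n+2) + 1) * qRec a (n+1)
      have := qRec_mono a ha n
      nlinarith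

/-- The key lower bound on `log q_n`. -/
lemma log_qRec_ge (M : ℕ) (hM : 2 ≤ M) (a : ℕ → ℕ) (ha1 : ∀ i, 1 ≤ i → 1 ≤ a i)
    (haM : ∀ i, 1 ≤ i → a i ≤ M) :
    ∀ n, 1 ≤ n →
      (∑ i ∈ Finset.Icc 1 n, Real.log (a i)) + ((n : ℝ) - 1) * (Real.log 2 / (M * (M + 1)))
        ≤ Real.log (qRec a n) := by
  intro n hn
  induction n, hn using Nat.le_induction with
  | base => simp [qRec]
  | succ n hn ih =>
    obtain ⟨m, rfl⟩ : ∃ m, n = m + 1 := ⟨n - 1, by omega⟩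
    set A : ℝ := (a (m + 2) : ℝ) with hA
    set B : ℝ := (a (m + 1) : ℝ) with hB
    set Q : ℝ := (qRec a (m + 1) : ℝ) with hQ
    set Q' : ℝ := (qRec a m : ℝ) with hQ'
    have hA1 : (1:ℝ) ≤ A := by rw [hA]; exact_mod_cast ha1 (m+2) (by omega)
    have hAM : A ≤ M := by rw [hA]; exact_mod_cast haM (m+2) (by omega)
    have hB1 : (1:ℝ) ≤ B := by rw [hB]; exact_mod_cast ha1 (m+1) (by omega)
    have hBM : B ≤ M := by rw [hB]; exact_mod_cast haM (m+1) (by omega)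
    have hQ1 : (1:ℝ) ≤ Q := by rw [hQ]; exact_mod_cast qRec_pos a ha1 (m+1)
    have hQ'1 : (1:ℝ) ≤ Q' := by rw [hQ']; exact_mod_cast qRec_pos a ha1 m
    have hQle : Q ≤ (B + 1) * Q' := by
      have := qRec_le a ha1 m
      push_cast [hQ, hB, hQ']
      exact_mod_cast this
    have hM2 : (2:ℝ) ≤ (M:ℝ) := by exact_mod_cast hM
    set t : ℝ := 1 / (A * (B + 1)) with ht
    have hABpos : 0 < A * (B + 1) := by nlinarith
    have ht0 : 0 < t := by positivity
    have ht1 : t ≤ 1 := by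
      rw [ht, div_le_one hABpos]; nlinarith
    have htM : 1 / ((M:ℝ) * (M + 1)) ≤ t := by
      rw [ht]
      apply one_div_le_one_div_of_le hABpos
      nlinarith
    -- q(m+2) ≥ A*Q*(1+t)
    have hq2 : (qRec a (m + 2) : ℝ) = A * Q + Q' := by
      show ((a (m+2) * qRec a (m+1) + qRec a m : ℕ) : ℝ) = _
      push_cast; rfl
    have hstep : A * Q * (1 + t) ≤ (qRec a (m + 2) : ℝ) := by
      rw [hq2]
      have : A * Q * t = Q / (B + 1) := by
        rw [ht]; field_simp
      have hdiv : Q / (B + 1) ≤ Q' := by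
        rw [div_le_iff₀ (by linarith)]; linarith [hQle]
      nlinarith
    have hlog : Real.log A + Real.log Q + Real.log (1 + t)
        ≤ Real.log (qRec a (m + 2)) := by
      have h1 : Real.log (A * Q * (1 + t)) ≤ Real.log (qRec a (m+2)) :=
        Real.log_le_log (by positivity) hstep
      rw [Real.log_mul (by positivity) (by positivity),
        Real.log_mul (by positivity) (by positivity)] at h1
      linarith
    have hlog1t : Real.log 2 / ((M:ℝ) * (M + 1)) ≤ Real.log (1 + t) := by
      have h2 := log_one_add_ge (le_of_lt ht0) ht1
      have h3 : Real.log 2 / ((M:ℝ) * (M + 1)) ≤ t * Real.log 2 := by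
        rw [div_eq_mul_one_div, mul_comm]
        exact mul_le_mul_of_nonneg_right htM (Real.log_nonneg (by norm_num))
      linarith
    have hsum : ∑ i ∈ Finset.Icc 1 (m + 2), Real.log (a i)
        = (∑ i ∈ Finset.Icc 1 (m + 1), Real.log (a i)) + Real.log A := by
      rw [← Finset.sum_Icc_succ_top (by omega : 1 ≤ m + 2)]
    rw [hsum]
    have hcast : ((m + 2 : ℕ) : ℝ) - 1 = (((m + 1 : ℕ) : ℝ) - 1) + 1 := by push_cast; ring
    rw [hcast]
    linarith [ih, hlog, hlog1t]

/-- The pointwise bound for `n ≥ 2`. -/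
lemma pointwise_bound (M : ℕ) (hM : 2 ≤ M) (a : ℕ → ℕ) (ha1 : ∀ i, 1 ≤ i → 1 ≤ a i)
    (haM : ∀ i, 1 ≤ i → a i ≤ M) (n : ℕ) (hn : 2 ≤ n) :
    Real.log (∏ i ∈ Finset.Icc 1 n, (a i : ℝ)) / Real.log (qRec a n)
      ≤ (1 + Real.log 2 / (2 * M * (M + 1) * Real.log M))⁻¹ := by
  have hM2 : (2:ℝ) ≤ (M:ℝ) := by exact_mod_cast hM
  have hlogM : 0 < Real.log M := Real.log_pos (by linarith)
  have hlog2 : 0 < Real.log 2 := Real.log_pos (by norm_num)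
  set δ : ℝ := Real.log 2 / (2 * M * (M + 1) * Real.log M) with hδ
  set δ₀ : ℝ := Real.log 2 / ((M:ℝ) * (M + 1)) with hδ₀
  have hδpos : 0 < δ := by rw [hδ]; positivity
  have hδ₀pos : 0 < δ₀ := by rw [hδ₀]; positivity
  have hδlogM : Real.log M * δ = δ₀ / 2 := by
    rw [hδ, hδ₀]; field_simp
  set S : ℝ := ∑ i ∈ Finset.Icc 1 n, Real.log (a i) with hS
  have hprod : Real.log (∏ i ∈ Finset.Icc 1 n, (a i : ℝ)) = S := by
    rw [hS, Real.log_prod]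
    intro i hi
    have := ha1 i (Finset.mem_Icc.1 hi).1
    positivity
  have hS0 : 0 ≤ S := Finset.sum_nonneg fun i hi => by
    have := ha1 i (Finset.mem_Icc.1 hi).1
    exact Real.log_nonneg (by exact_mod_cast this)
  have hSle : S ≤ n * Real.log M := by
    calc S ≤ ∑ i ∈ Finset.Icc 1 n, Real.log M := by
          apply Finset.sum_le_sum
          intro i hi
          have h1 := ha1 i (Finset.mem_Icc.1 hi).1
          exact Real.log_le_log (by exact_mod_cast h1)
            (by exact_mod_cast haM i (Finset.mem_Icc.1 hi).1)
      _ = n * Real.log M := by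
          rw [Finset.sum_const, Nat.card_Icc]; simp
  have hkey := log_qRec_ge M hM a ha1 haM n (by omega)
  set L : ℝ := Real.log (qRec a n) with hL
  have hLge : S + ((n:ℝ) - 1) * δ₀ ≤ L := hkey
  have hn2 : (2:ℝ) ≤ (n:ℝ) := by exact_mod_cast hn
  have hLpos : 0 < L := by nlinarith
  rw [hprod]
  rw [inv_eq_one_div, div_le_div_iff₀ hLpos (by linarith)]
  -- S * (1 + δ) ≤ L
  have h1 : S * δ ≤ (n : ℝ) * Real.log M * δ :=
    mul_le_mul_of_nonneg_right hSle (le_of_lt hδpos)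
  have h2 : (n:ℝ) * Real.log M * δ = (n:ℝ) * (δ₀ / 2) := by
    rw [mul_assoc, hδlogM]
  have h3 : (n:ℝ) * (δ₀ / 2) ≤ ((n:ℝ) - 1) * δ₀ := by nlinarith
  nlinarith

lemma gauss_iter (x : ℝ) (hx : x ∈ Set.Ioo (0 : ℝ) 1) (hirr : Irrational x) :
    ∀ k, gaussMap^[k] x ∈ Set.Ioo (0 : ℝ) 1 ∧ Irrational (gaussMap^[k] x) := by
  intro k
  induction k with
  | zero => exact ⟨hx, hirr⟩
  | succ k ih =>
    obtain ⟨⟨hy0, hy1⟩, hyirr⟩ := ih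
    rw [Function.iterate_succ_apply']
    set y := gaussMap^[k] x
    have hinv : Irrational (1 / y) := by
      rw [one_div]; exact hyirr.inv
    have hfract : gaussMap y = Int.fract (1 / y) := by
      rw [gaussMap, Int.fract]
    have hirr' : Irrational (gaussMap y) := by
      rw [hfract, Int.fract]; exact hinv.sub_intCast _
    refine ⟨⟨?_, ?_⟩, hirr'⟩
    · have h0le : (0:ℝ) ≤ gaussMap y := by rw [hfract]; exact Int.fract_nonneg _
      rcases lt_or_eq_of_le h0le with h | h
      · exact h
      · exact absurd h.symm hirr'.ne_zero
    · rw [hfract]; exact Int.fract_lt_one _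

lemma cfDigit_pos (x : ℝ) (hx : x ∈ Set.Ioo (0 : ℝ) 1) (hirr : Irrational x) :
    ∀ i, 1 ≤ i → 1 ≤ cfDigit x i := by
  intro i hi
  obtain ⟨⟨hy0, hy1⟩, _⟩ := gauss_iter x hx hirr (i - 1)
  rw [cfDigit]
  have h1 : (1:ℝ) ≤ 1 / gaussMap^[i-1] x := by
    rw [le_div_iff₀ hy0]; linarith
  exact Nat.le_floor (by exact_mod_cast h1)

/-- If all continued fraction digits of `x` are bounded by `M ≥ 2`, then the limsup of the
arithmetic-geometric quotient is at most `(1 + log 2/(2M(M+1) log M))⁻¹ < 1`. -/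
theorem bounded_digits_scaling_away_from_one (M : ℕ) (hM : 2 ≤ M) (x : ℝ)
    (hx : x ∈ Set.Ioo (0 : ℝ) 1) (hirr : Irrational x)
    (hdig : ∀ i, 1 ≤ i → cfDigit x i ≤ M) :
    Filter.limsup (fun n : ℕ =>
        Real.log (∏ i ∈ Finset.Icc 1 n, (cfDigit x i : ℝ)) / Real.log (cfDenom x n))
      atTop ≤ (1 + Real.log 2 / (2 * M * (M + 1) * Real.log M))⁻¹ ∧
    (1 + Real.log 2 / (2 * (M : ℝ) * (M + 1) * Real.log M))⁻¹ < 1 := by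
  have ha1 := cfDigit_pos x hx hirr
  have hM2 : (2:ℝ) ≤ (M:ℝ) := by exact_mod_cast hM
  have hlogM : 0 < Real.log M := Real.log_pos (by linarith)
  have hlog2 : 0 < Real.log 2 := Real.log_pos (by norm_num)
  have hδpos : 0 < Real.log 2 / (2 * (M:ℝ) * (M + 1) * Real.log M) := by positivity
  have hev : ∀ᶠ n : ℕ in atTop,
      Real.log (∏ i ∈ Finset.Icc 1 n, (cfDigit x i : ℝ)) / Real.log (cfDenom x n)
        ≤ (1 + Real.log 2 / (2 * M * (M + 1) * Real.log M))⁻¹ := by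
    filter_upwards [eventually_ge_atTop 2] with n hn
    exact pointwise_bound M hM (cfDigit x) ha1 hdig n hn
  have hev0 : ∀ᶠ n : ℕ in atTop, (0:ℝ) ≤
      Real.log (∏ i ∈ Finset.Icc 1 n, (cfDigit x i : ℝ)) / Real.log (cfDenom x n) := by
    filter_upwards [eventually_ge_atTop 2] with n hn
    apply div_nonneg
    · apply Real.log_nonneg
      rw [← Nat.cast_prod]
      exact_mod_cast Finset.one_le_prod' fun i hi => ha1 i (Finset.mem_Icc.1 hi).1
    · exact Real.log_nonneg (by exact_mod_cast qRec_pos (cfDigit x) ha1 n)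
  constructor
  · exact Filter.limsup_le_of_le (Filter.isCoboundedUnder_le_of_eventually_le _ hev0) hev
  · rw [inv_lt_one_iff₀]
    right; linarith
end

section
/- For t ≤ 0 and any n ≥ 1, ζ(2(t+β))^n ≤ ∑_{ω∈ℕ^n} q_n(ω)^{−2t} ∏_{i=1}^n ω_i^{−2β} ≤ 2^{−2nt} ζ(2(t+β))^n, where the middle sum may be infinite and ζ is the Riemann zeta function (with ζ(s) = +∞ for s ≤ 1). -/
open Filter ENNReal

/-- The continued fraction denominator `q_n(ω)` of a finite word `ω ∈ ℕ^n`. -/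
def wordQ {n : ℕ} (w : Fin n → ℕ+) : ℕ :=
  qRec (fun i => if h : 1 ≤ i ∧ i ≤ n then (w ⟨i - 1, by omega⟩ : ℕ) else 1) n

/-- The `n`-th partition function `Z_n(t,β) = ∑_{ω ∈ ℕ^n} q_n(ω)^{−2t} ∏ ω_i^{−2β}`,
valued in `[0,∞]`. -/
noncomputable def Zpart (t β : ℝ) (n : ℕ) : ℝ≥0∞ :=
  ∑' w : Fin n → ℕ+,
    ((wordQ w : ℝ≥0∞)) ^ (-2 * t) * ∏ i : Fin n, (((w i : ℕ) : ℝ≥0∞)) ^ (-2 * β)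

/-- The zeta series `∑_{k≥1} k^{−s}` valued in `[0,∞]` (equal to `+∞` for `s ≤ 1`). -/
noncomputable def zetaE (s : ℝ) : ℝ≥0∞ := ∑' k : ℕ+, (((k : ℕ) : ℝ≥0∞)) ^ (-s)

lemma qRec_bounds (a : ℕ → ℕ) (ha : ∀ i, 1 ≤ a i) :
    ∀ n, (∏ i ∈ Finset.Icc 1 n, a i) ≤ qRec a n ∧
      qRec a n ≤ 2 ^ n * ∏ i ∈ Finset.Icc 1 n, a i
  | 0 => by simp [qRec]
  | 1 => by
      have : Finset.Icc 1 1 = {1} := Finset.Icc_self 1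
      simp [qRec, this]
      omega
  | (n + 2) => by
      obtain ⟨h1l, h1u⟩ := qRec_bounds a ha (n + 1)
      obtain ⟨h0l, h0u⟩ := qRec_bounds a ha n
      have hP2 : ∏ i ∈ Finset.Icc 1 (n + 2), a i
          = (∏ i ∈ Finset.Icc 1 (n + 1), a i) * a (n + 2) :=
        Finset.prod_Icc_succ_top (by omega) a
      have hP1 : ∏ i ∈ Finset.Icc 1 (n + 1), a i
          = (∏ i ∈ Finset.Icc 1 n, a i) * a (n + 1) :=
        Finset.prod_Icc_succ_top (by omega) a
      have hmono : (∏ i ∈ Finset.Icc 1 n, a i) ≤ ∏ i ∈ Finset.Icc 1 (n + 1), a i := by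
        rw [hP1]; exact Nat.le_mul_of_pos_right _ (ha _)
      have hmono2 : (∏ i ∈ Finset.Icc 1 (n+1), a i) ≤ ∏ i ∈ Finset.Icc 1 (n + 2), a i := by
        rw [hP2]; exact Nat.le_mul_of_pos_right _ (ha _)
      constructor
      · calc ∏ i ∈ Finset.Icc 1 (n + 2), a i
            = (∏ i ∈ Finset.Icc 1 (n + 1), a i) * a (n + 2) := hP2
          _ ≤ qRec a (n + 1) * a (n + 2) := Nat.mul_le_mul_right _ h1l
          _ ≤ a (n + 2) * qRec a (n + 1) + qRec a n := by rw [Nat.mul_comm]; omega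
          _ = qRec a (n + 2) := rfl
      · calc qRec a (n + 2) = a (n + 2) * qRec a (n + 1) + qRec a n := rfl
          _ ≤ a (n + 2) * (2 ^ (n + 1) * ∏ i ∈ Finset.Icc 1 (n + 1), a i)
              + 2 ^ n * ∏ i ∈ Finset.Icc 1 n, a i := by
                exact Nat.add_le_add (Nat.mul_le_mul_left _ h1u) h0u
          _ = 2 ^ (n + 1) * ∏ i ∈ Finset.Icc 1 (n + 2), a i
              + 2 ^ n * ∏ i ∈ Finset.Icc 1 n, a i := by rw [hP2]; ring
          _ ≤ 2 ^ (n + 1) * ∏ i ∈ Finset.Icc 1 (n + 2), a i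
              + 2 ^ n * ∏ i ∈ Finset.Icc 1 (n + 2), a i :=
                Nat.add_le_add_left (Nat.mul_le_mul_left _ (le_trans hmono hmono2)) _
          _ ≤ 2 ^ (n + 2) * ∏ i ∈ Finset.Icc 1 (n + 2), a i := by ring_nf; omega

lemma wordQ_bounds {n : ℕ} (w : Fin n → ℕ+) :
    (∏ i : Fin n, (w i : ℕ)) ≤ wordQ w ∧ wordQ w ≤ 2 ^ n * ∏ i : Fin n, (w i : ℕ) := by
  set a : ℕ → ℕ := fun i => if h : 1 ≤ i ∧ i ≤ n then (w ⟨i - 1, by omega⟩ : ℕ) else 1 with ha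
  have hpos : ∀ i, 1 ≤ a i := by
    intro i
    by_cases h : 1 ≤ i ∧ i ≤ n
    · simp only [ha, dif_pos h]; exact (w _).one_le
    · simp [ha, dif_neg h]
  have hprod : ∏ i ∈ Finset.Icc 1 n, a i = ∏ i : Fin n, (w i : ℕ) := by
    rw [show Finset.Icc 1 n = Finset.Ico 1 (n + 1) by rw [Finset.Ico_add_one_right_eq_Icc],
      Finset.prod_Ico_eq_prod_range,
      show (n + 1 - 1) = n from rfl,
      ← Fin.prod_univ_eq_prod_range (fun k => a (1 + k)) n]
    refine Finset.prod_congr rfl fun i _ => ?_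
    have h1 : 1 ≤ 1 + (i : ℕ) ∧ 1 + (i : ℕ) ≤ n := ⟨by omega, by omega⟩
    simp only [ha, dif_pos h1]
    have h2 : (⟨1 + (i : ℕ) - 1, by omega⟩ : Fin n) = i := by
      apply Fin.ext; simp
    rw [h2]
  obtain ⟨hl, hu⟩ := qRec_bounds a hpos n
  rw [hprod] at hl hu
  exact ⟨hl, hu⟩

lemma tsum_pi_prod (f : ℕ+ → ℝ≥0∞) :
    ∀ n, (∑' w : Fin n → ℕ+, ∏ i : Fin n, f (w i)) = (∑' k : ℕ+, f k) ^ n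
  | 0 => by
      rw [pow_zero]
      rw [tsum_eq_single (fun i => i.elim0) (fun b hb => absurd (Subsingleton.elim b _) hb)]
      simp
  | (n + 1) => by
      have heq : ∀ p : ℕ+ × (Fin n → ℕ+),
          (∏ i : Fin (n + 1), f ((Fin.consEquiv fun _ : Fin (n + 1) => ℕ+) p i))
            = f p.1 * ∏ i : Fin n, f (p.2 i) := by
        intro p
        rw [Fin.prod_univ_succ]
        simp [Fin.consEquiv]
      have key : (∑' w : Fin (n + 1) → ℕ+, ∏ i : Fin (n + 1), f (w i))
          = ∑' p : ℕ+ × (Fin n → ℕ+), f p.1 * ∏ i : Fin n, f (p.2 i) := by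
        rw [← ((Fin.consEquiv (fun _ : Fin (n + 1) => ℕ+)).tsum_eq
          (fun w : Fin (n + 1) → ℕ+ => ∏ i : Fin (n + 1), f (w i)))]
        exact tsum_congr heq
      rw [key, ENNReal.tsum_prod']
      have h2 : ∀ k : ℕ+, (∑' v : Fin n → ℕ+, f k * ∏ i : Fin n, f (v i))
          = f k * ∑' v : Fin n → ℕ+, ∏ i : Fin n, f (v i) := fun k => ENNReal.tsum_mul_left
      rw [tsum_congr h2, ENNReal.tsum_mul_right, tsum_pi_prod f n, mul_comm, ← pow_succ]

/-- For `t ≤ 0` and `n ≥ 1`: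
`ζ(2(t+β))ⁿ ≤ ∑_{ω∈ℕⁿ} q_n(ω)^{−2t} ∏ ω_i^{−2β} ≤ 2^{−2nt} ζ(2(t+β))ⁿ`. -/
theorem partition_function_zeta_bounds (t β : ℝ) (ht : t ≤ 0) (n : ℕ) (hn : 1 ≤ n) :
    zetaE (2 * (t + β)) ^ n ≤ Zpart t β n ∧
      Zpart t β n ≤ (2 : ℝ≥0∞) ^ (-2 * (n : ℝ) * t) * zetaE (2 * (t + β)) ^ n := by
  have ht' : (0 : ℝ) ≤ -2 * t := by linarith
  set g : ℕ+ → ℝ≥0∞ := fun k => (((k : ℕ) : ℝ≥0∞)) ^ (-(2 * (t + β))) with hg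
  have hzeta : zetaE (2 * (t + β)) = ∑' k : ℕ+, g k := rfl
  -- pointwise identity : ∏ g (w i) = (∏ w i)^(-2t) * ∏ (w i)^(-2β)
  have hptw : ∀ (w : Fin n → ℕ+),
      (∏ i : Fin n, g (w i))
        = ((∏ i : Fin n, (w i : ℕ) : ℕ) : ℝ≥0∞) ^ (-2 * t)
          * ∏ i : Fin n, (((w i : ℕ) : ℝ≥0∞)) ^ (-2 * β) := by
    intro w
    have hne0 : ∀ i : Fin n, (((w i : ℕ) : ℝ≥0∞)) ≠ 0 := by
      intro i; exact Nat.cast_ne_zero.mpr (w i).ne_zero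
    have hnetop : ∀ i : Fin n, (((w i : ℕ) : ℝ≥0∞)) ≠ ⊤ := fun i => ENNReal.natCast_ne_top _
    rw [Nat.cast_prod, ← ENNReal.prod_rpow_of_ne_top (fun i _ => hnetop i),
      ← Finset.prod_mul_distrib]
    refine Finset.prod_congr rfl fun i _ => ?_
    rw [← ENNReal.rpow_add _ _ (hne0 i) (hnetop i)]
    simp only [hg]
    ring_nf
  -- lower bound pointwise
  have hlow : ∀ w : Fin n → ℕ+,
      (∏ i : Fin n, g (w i))
        ≤ ((wordQ w : ℝ≥0∞)) ^ (-2 * t) * ∏ i : Fin n, (((w i : ℕ) : ℝ≥0∞)) ^ (-2 * β) := by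
    intro w
    rw [hptw w]
    refine mul_le_mul_left ?_ _
    exact ENNReal.rpow_le_rpow (by exact_mod_cast Nat.cast_le.mpr (wordQ_bounds w).1) ht'
  have hup : ∀ w : Fin n → ℕ+,
      ((wordQ w : ℝ≥0∞)) ^ (-2 * t) * ∏ i : Fin n, (((w i : ℕ) : ℝ≥0∞)) ^ (-2 * β)
        ≤ (2 : ℝ≥0∞) ^ (-2 * (n : ℝ) * t) * ∏ i : Fin n, g (w i) := by
    intro w
    rw [hptw w]
    rw [← mul_assoc]
    refine mul_le_mul_left ?_ _
    calc ((wordQ w : ℝ≥0∞)) ^ (-2 * t)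
        ≤ ((2 ^ n * ∏ i : Fin n, (w i : ℕ) : ℕ) : ℝ≥0∞) ^ (-2 * t) :=
          ENNReal.rpow_le_rpow (by exact_mod_cast Nat.cast_le.mpr (wordQ_bounds w).2) ht'
      _ = (2 : ℝ≥0∞) ^ (-2 * (n : ℝ) * t)
          * ((∏ i : Fin n, (w i : ℕ) : ℕ) : ℝ≥0∞) ^ (-2 * t) := by
          rw [Nat.cast_mul, ENNReal.mul_rpow_of_nonneg _ _ ht']
          congr 1
          rw [Nat.cast_pow, Nat.cast_ofNat, ← ENNReal.rpow_natCast (2 : ℝ≥0∞) n,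
            ← ENNReal.rpow_mul]
          congr 1
          ring
  constructor
  · rw [hzeta, ← tsum_pi_prod g n]
    exact ENNReal.tsum_le_tsum hlow
  · calc Zpart t β n ≤ ∑' w : Fin n → ℕ+,
        (2 : ℝ≥0∞) ^ (-2 * (n : ℝ) * t) * ∏ i : Fin n, g (w i) := ENNReal.tsum_le_tsum hup
      _ = (2 : ℝ≥0∞) ^ (-2 * (n : ℝ) * t) * ∑' w : Fin n → ℕ+, ∏ i : Fin n, g (w i) :=
          ENNReal.tsum_mul_left
      _ = (2 : ℝ≥0∞) ^ (-2 * (n : ℝ) * t) * zetaE (2 * (t + β)) ^ n := by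
          rw [tsum_pi_prod g n, hzeta]
end
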